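/- Let p > q > 0 be coprime integers and let p/q = [a_1, …, a_n] be the continued fraction expansion p/q = a_1 - 1/(a_2 - 1/(⋯ - 1/a_n)) with all a_i ≥ 2. Then the symmetric tridiagonal n×n integer matrix M with diagonal entries a_1, …, a_n and off-diagonal entries 1 (i.e. M_{ii} = a_i, M_{i,i+1} = M_{i+1,i} = 1, and 0 elsewhere) is positive definite. -/

import Mathlib

/-- The negative continued fraction `a₁ - 1/(a₂ - 1/(⋯ - 1/aₙ))` as a rational number. -/
def negCF : List ℤ → ℚ
  | [] => 0
  | a :: l => (a : ℚ) - (negCF l)⁻¹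

open Matrix Finset

/-- The bidiagonal `(n+1) × n` matrix with 1's on positions `(j,j)` and `(j+1,j)`. -/
def offA (n : ℕ) : Matrix (Fin (n + 1)) (Fin n) ℝ :=
  fun k j => (if (k : ℕ) = (j : ℕ) then 1 else 0) + (if (k : ℕ) = (j : ℕ) + 1 then 1 else 0)

lemma sum_delta_fin {N : ℕ} (m : ℕ) (f : Fin N → ℝ) :
    (∑ k : Fin N, if (k : ℕ) = m then f k else 0) = if h : m < N then f ⟨m, h⟩ else 0 := by
  split_ifs with h
  · rw [Finset.sum_eq_single (⟨m, h⟩ : Fin N)]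
    · simp
    · intro j _ hj
      rw [if_neg]
      intro hjm
      exact hj (Fin.ext hjm)
    · simp
  · apply Finset.sum_eq_zero
    intro j _
    rw [if_neg]
    intro hjm
    exact h (hjm ▸ j.isLt)

lemma sum_delta_fin' {N : ℕ} (m : ℕ) (f : Fin N → ℝ) :
    (∑ k : Fin N, if m = (k : ℕ) then f k else 0) = if h : m < N then f ⟨m, h⟩ else 0 := by
  rw [← sum_delta_fin m f]
  refine Finset.sum_congr rfl fun j _ => ?_
  by_cases h : (j : ℕ) = m
  · rw [if_pos h, if_pos h.symm]
  · rw [if_neg h, if_neg fun e => h e.symm]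

lemma sum_delta_prod {N : ℕ} (m₁ m₂ : ℕ) :
    (∑ k : Fin N, (if (k : ℕ) = m₁ then (1 : ℝ) else 0) * (if (k : ℕ) = m₂ then 1 else 0)) =
      if m₁ = m₂ ∧ m₁ < N then 1 else 0 := by
  rcases eq_or_ne m₁ m₂ with h | h
  · subst h
    have e : ∀ k : Fin N,
        (if (k : ℕ) = m₁ then (1 : ℝ) else 0) * (if (k : ℕ) = m₁ then 1 else 0) =
        if (k : ℕ) = m₁ then (1 : ℝ) else 0 := fun k => by split_ifs <;> ring
    rw [Finset.sum_congr rfl fun k _ => e k, sum_delta_fin m₁ (fun _ => (1 : ℝ))]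
    simp
  · have e : ∀ k : Fin N,
        (if (k : ℕ) = m₁ then (1 : ℝ) else 0) * (if (k : ℕ) = m₂ then 1 else 0) = 0 :=
      fun k => by split_ifs with h1 h2 <;> first | ring1 | exact (h (h1.symm.trans h2)).elim
    rw [Finset.sum_congr rfl fun k _ => e k, Finset.sum_const_zero, if_neg (by tauto)]

lemma offA_entry {n : ℕ} (i j : Fin n) :
    ((offA n)ᴴ * offA n) i j =
      if (i : ℕ) = (j : ℕ) then 2
      else if (i : ℕ) + 1 = (j : ℕ) ∨ (j : ℕ) + 1 = (i : ℕ) then 1 else 0 := by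
  have : ((offA n)ᴴ * offA n) i j = ∑ k : Fin (n + 1), offA n k i * offA n k j := by
    simp [Matrix.mul_apply, Matrix.conjTranspose_apply]
  rw [this]
  simp only [offA, add_mul, mul_add]
  rw [Finset.sum_add_distrib, Finset.sum_add_distrib, Finset.sum_add_distrib,
    sum_delta_prod, sum_delta_prod, sum_delta_prod, sum_delta_prod]
  have hi := i.isLt
  have hj := j.isLt
  split_ifs <;> first | omega | norm_num

lemma offA_mulVec {n : ℕ} (x : Fin n → ℝ) (k : Fin (n + 1)) :
    ((offA n) *ᵥ x) k =
      (if h : (k : ℕ) < n then x ⟨k, h⟩ else 0) +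
      (if h : (k : ℕ) - 1 < n ∧ 1 ≤ (k : ℕ) then x ⟨(k : ℕ) - 1, h.1⟩ else 0) := by
  have : ((offA n) *ᵥ x) k = ∑ j : Fin n, offA n k j * x j := by
    simp [Matrix.mulVec, dotProduct]
  rw [this]
  simp only [offA, add_mul, ite_mul, one_mul, zero_mul]
  rw [Finset.sum_add_distrib, sum_delta_fin' (k : ℕ) x]
  congr 1
  rcases Nat.eq_zero_or_pos (k : ℕ) with h0 | h0
  · rw [dif_neg (by omega)]
    apply Finset.sum_eq_zero
    intro j _
    rw [if_neg (by omega)]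
  · obtain ⟨m, hm⟩ : ∃ m, (k : ℕ) = m + 1 := ⟨(k : ℕ) - 1, by omega⟩
    have e : ∀ j : Fin n, (if (k : ℕ) = (j : ℕ) + 1 then x j else 0) =
        (if m = (j : ℕ) then x j else 0) := fun j => by
      congr 1
      simp only [hm, eq_iff_iff]
      omega
    rw [Finset.sum_congr rfl fun j _ => e j, sum_delta_fin' m x]
    have : (k : ℕ) - 1 = m := by omega
    split_ifs with h1 h2 h2 <;> simp_all <;> omega

lemma offA_mulVec_injective {n : ℕ} (x : Fin n → ℝ) (h0 : (offA n) *ᵥ x = 0) : x = 0 := by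
  have key : ∀ m : ℕ, ∀ hm : m < n, x ⟨m, hm⟩ = 0 := by
    intro m
    induction m with
    | zero =>
      intro hm
      have hk := congrFun h0 (⟨0, Nat.succ_pos n⟩ : Fin (n + 1))
      rw [offA_mulVec] at hk
      simpa [dif_pos hm] using hk
    | succ m ih =>
      intro hm
      have hk := congrFun h0 (⟨m + 1, by omega⟩ : Fin (n + 1))
      rw [offA_mulVec] at hk
      simp only [dif_pos (show ((⟨m + 1, by omega⟩ : Fin (n+1)) : ℕ) < n from hm)] at hk
      rw [dif_pos (show ((⟨m + 1, by omega⟩ : Fin (n+1)) : ℕ) - 1 < n ∧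
        1 ≤ ((⟨m + 1, by omega⟩ : Fin (n+1)) : ℕ) from ⟨by simpa using (by omega : m < n), by simp⟩)]
        at hk
      have hx2 : x ⟨m, by omega⟩ = 0 := ih (by omega)
      simp only [Pi.zero_apply] at hk
      have : x ⟨m + 1, hm⟩ + x ⟨m, by omega⟩ = 0 := by
        convert hk using 3 <;> simp
      rw [hx2, add_zero] at this
      exact this
  funext i
  have := key i.val i.isLt
  simpa using this

theorem tridiagonal_posDef (p q : ℤ) (hq : 0 < q) (hpq : q < p) (hcop : IsCoprime p q)
    (n : ℕ) (a : Fin n → ℤ) (ha : ∀ i, 2 ≤ a i)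
    (hcf : negCF (List.ofFn a) = (p : ℚ) / (q : ℚ))
    (M : Matrix (Fin n) (Fin n) ℝ)
    (hM : ∀ i j, M i j =
      if (i : ℕ) = (j : ℕ) then (a i : ℝ)
      else if (i : ℕ) + 1 = (j : ℕ) ∨ (j : ℕ) + 1 = (i : ℕ) then 1 else 0) :
    M.PosDef := by
  let A := offA n
  let D : Matrix (Fin n) (Fin n) ℝ := Matrix.diagonal (fun i => (a i : ℝ) - 2)
  have hMeq : M = Aᴴ * A + D := by
    ext i j
    rw [Matrix.add_apply, hM i j]
    show _ = ((offA n)ᴴ * offA n) i j + Matrix.diagonal (fun i => (a i : ℝ) - 2) i j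
    rw [offA_entry i j, Matrix.diagonal_apply]
    by_cases h : i = j
    · subst h
      simp only [if_pos rfl]
      push_cast
      ring1
    · have h' : ¬((i : ℕ) = (j : ℕ)) := fun e => h (Fin.ext e)
      rw [if_neg h', if_neg h', if_neg h, add_zero]
  have hDpsd : D.PosSemidef := by
    refine Matrix.posSemidef_diagonal_iff.mpr fun i => ?_
    have : (2 : ℝ) ≤ (a i : ℝ) := by exact_mod_cast ha i
    linarith
  have hApsd : (Aᴴ * A).PosSemidef := Matrix.posSemidef_conjTranspose_mul_self A
  rw [hMeq]
  refine Matrix.posDef_iff_dotProduct_mulVec.mpr ⟨hApsd.1.add hDpsd.1, fun x hx => ?_⟩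
  rw [Matrix.add_mulVec, dotProduct_add]
  refine add_pos_of_pos_of_nonneg ?_ ((Matrix.posSemidef_iff_dotProduct_mulVec.mp hDpsd).2 x)
  have hAx : A *ᵥ x ≠ 0 := fun h => hx (offA_mulVec_injective x h)
  rw [← Matrix.mulVec_mulVec, Matrix.dotProduct_mulVec, Matrix.vecMul_conjTranspose, star_star]
  exact Matrix.dotProduct_star_self_pos_iff.mpr hAx
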